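/- Let n, N be natural numbers with N ≥ 2, let Δ > 0, α₁ ∈ ℝ, set α_i = α₁ + (i−1)·Δ for i = 1, …, N, and S = [α₁, α_N]. Let f : ℝ → EuclideanSpace ℝ (Fin n). Suppose that for every coordinate j and every α ∈ S, the level set U = {t ∈ S | f(t) j = f(α) j} is order-connected, contains its infimum, and satisfies sSup U − sInf U ≥ Δ. Then for every α ∈ S, min_{1 ≤ i ≤ N} ‖f(α) − f(α_i)‖ ≤ (1/√2) · max_{1 ≤ i ≤ N−1} ‖f(α_i) − f(α_{i+1})‖. -/

import Mathlib

/-- Analytic core of the paper's Theorem 4 (certification with fully-covered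
partitions): with uniform partition points `α i = α₁ + i·Δ` (`i = 0, …, N-1`,
i.e. `αᵢ = α₁ + (i-1)Δ` for `i = 1, …, N`) of spacing `Δ > 0` over
`S = [α₁, α₁ + (N-1)Δ]`, if every coordinate `j` of `f` has level sets within
`S` that are order-connected, contain their infimum, and have length at least
`Δ`, then the projection error over `S` is controlled by the distances between
consecutive partition images. -/
theorem certification_fully_covered_partitions (n N : ℕ) (hN : 2 ≤ N)
    (Δ : ℝ) (hΔ : 0 < Δ) (a₁ : ℝ)
    (f : ℝ → EuclideanSpace ℝ (Fin n))
    (hU : ∀ j : Fin n, ∀ α ∈ Set.Icc a₁ (a₁ + ((N : ℝ) - 1) * Δ),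
      ({t ∈ Set.Icc a₁ (a₁ + ((N : ℝ) - 1) * Δ) | f t j = f α j}).OrdConnected ∧
      sInf {t ∈ Set.Icc a₁ (a₁ + ((N : ℝ) - 1) * Δ) | f t j = f α j} ∈
        {t ∈ Set.Icc a₁ (a₁ + ((N : ℝ) - 1) * Δ) | f t j = f α j} ∧
      Δ ≤ sSup {t ∈ Set.Icc a₁ (a₁ + ((N : ℝ) - 1) * Δ) | f t j = f α j} -
        sInf {t ∈ Set.Icc a₁ (a₁ + ((N : ℝ) - 1) * Δ) | f t j = f α j}) :
    ∀ α ∈ Set.Icc a₁ (a₁ + ((N : ℝ) - 1) * Δ),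
      (⨅ i : Fin N, ‖f α - f (a₁ + (i : ℝ) * Δ)‖) ≤
        (Real.sqrt 2)⁻¹ *
          ⨆ i : Fin (N - 1), ‖f (a₁ + (i : ℝ) * Δ) - f (a₁ + ((i : ℝ) + 1) * Δ)‖ := by
  intro α hα
  set s : ℝ := (α - a₁) / Δ with hs
  have hs0 : 0 ≤ s := div_nonneg (by linarith [hα.1]) hΔ.le
  set k : ℕ := min (⌊s⌋.toNat) (N - 2) with hk
  have hkN : k ≤ N - 2 := min_le_right _ _
  have hklt : k < N := by omega
  have hk1lt : k + 1 < N := by omega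
  have hkN1 : k < N - 1 := by omega
  have hαs : α = a₁ + s * Δ := by rw [hs, div_mul_cancel₀ _ hΔ.ne']; ring
  have hfloor : ((⌊s⌋.toNat : ℕ) : ℝ) = (⌊s⌋ : ℝ) := by
    exact_mod_cast Int.toNat_of_nonneg (Int.floor_nonneg.mpr hs0)
  have hl : a₁ + (k : ℝ) * Δ ≤ α := by
    have h1 : (k : ℝ) ≤ ((⌊s⌋.toNat : ℕ) : ℝ) := by
      exact_mod_cast min_le_left (⌊s⌋.toNat) (N - 2)
    have h2 : (k : ℝ) ≤ s := by
      rw [hfloor] at h1; exact h1.trans (Int.floor_le s)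
    nlinarith
  have hr : α ≤ a₁ + ((k : ℝ) + 1) * Δ := by
    rcases le_or_gt (⌊s⌋.toNat) (N - 2) with h | h
    · have hkk : k = ⌊s⌋.toNat := by omega
      have h2 : s < (k : ℝ) + 1 := by
        rw [hkk, hfloor]; exact Int.lt_floor_add_one s
      nlinarith
    · have hkk : k = N - 2 := by omega
      have h2 : ((k : ℝ) + 1) = (N : ℝ) - 1 := by
        rw [hkk]; push_cast [Nat.cast_sub (by omega : 2 ≤ N)]; ring
      rw [h2]; exact hα.2
  set A := f (a₁ + (k : ℝ) * Δ) with hA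
  set B := f (a₁ + ((k : ℝ) + 1) * Δ) with hB
  have key : ∀ j : Fin n, f α j = A j ∨ f α j = B j := by
    intro j
    obtain ⟨hOC, hInf, hLen⟩ := hU j α hα
    set U := {t ∈ Set.Icc a₁ (a₁ + ((N : ℝ) - 1) * Δ) | f t j = f α j} with hUdef
    have hαU : α ∈ U := ⟨hα, rfl⟩
    have hne : U.Nonempty := ⟨α, hαU⟩
    have hbddb : BddBelow U := BddBelow.mono (fun t ht => ht.1) bddBelow_Icc
    have hbdda : BddAbove U := BddAbove.mono (fun t ht => ht.1) bddAbove_Icc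
    have hcle : sInf U ≤ α := csInf_le hbddb hαU
    rcases le_or_gt (sInf U) (a₁ + (k : ℝ) * Δ) with hcase | hcase
    · left
      have : a₁ + (k : ℝ) * Δ ∈ U := hOC.out hInf hαU ⟨hcase, hl⟩
      exact this.2.symm
    · right
      have hlt : a₁ + ((k : ℝ) + 1) * Δ < sSup U := by nlinarith
      obtain ⟨y, hyU, hy⟩ := exists_lt_of_lt_csSup hne hlt
      have : a₁ + ((k : ℝ) + 1) * Δ ∈ U :=
        hOC.out hInf hyU ⟨by linarith, hy.le⟩
      exact this.2.symm
  have normsq : ∀ x : EuclideanSpace ℝ (Fin n), ‖x‖ ^ 2 = ∑ j, (x j) ^ 2 := by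
    intro x
    rw [EuclideanSpace.norm_eq, Real.sq_sqrt (by positivity)]
    simp [Real.norm_eq_abs, sq_abs]
  have hsum : ‖f α - A‖ ^ 2 + ‖f α - B‖ ^ 2 ≤ ‖A - B‖ ^ 2 := by
    rw [normsq, normsq, normsq, ← Finset.sum_add_distrib]
    apply Finset.sum_le_sum
    intro j _
    simp only [PiLp.sub_apply]
    rcases key j with h | h <;> rw [h] <;> nlinarith [sq_nonneg (A j - B j)]
  set m := min ‖f α - A‖ ‖f α - B‖ with hm
  have hm0 : 0 ≤ m := le_min (norm_nonneg _) (norm_nonneg _)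
  have h2m : 2 * m ^ 2 ≤ ‖A - B‖ ^ 2 := by
    have h1 : m ^ 2 ≤ ‖f α - A‖ ^ 2 := pow_le_pow_left₀ hm0 (min_le_left _ _) 2
    have h2 : m ^ 2 ≤ ‖f α - B‖ ^ 2 := pow_le_pow_left₀ hm0 (min_le_right _ _) 2
    linarith
  have hmD : m ≤ (Real.sqrt 2)⁻¹ * ‖A - B‖ := by
    rw [inv_mul_eq_div, le_div_iff₀ (Real.sqrt_pos.mpr two_pos)]
    have h1 : (m * Real.sqrt 2) ^ 2 ≤ ‖A - B‖ ^ 2 := by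
      rw [mul_pow, Real.sq_sqrt (by norm_num : (0:ℝ) ≤ 2)]; linarith
    calc m * Real.sqrt 2 = Real.sqrt ((m * Real.sqrt 2) ^ 2) :=
          (Real.sqrt_sq (by positivity)).symm
      _ ≤ Real.sqrt (‖A - B‖ ^ 2) := Real.sqrt_le_sqrt h1
      _ = ‖A - B‖ := Real.sqrt_sq (norm_nonneg _)
  have hInf_le : (⨅ i : Fin N, ‖f α - f (a₁ + (i : ℝ) * Δ)‖) ≤ m := by
    apply le_min
    · exact ciInf_le (Finite.bddBelow_range _) (⟨k, hklt⟩ : Fin N)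
    · have := ciInf_le (Finite.bddBelow_range fun i : Fin N => ‖f α - f (a₁ + (i : ℝ) * Δ)‖)
        (⟨k + 1, hk1lt⟩ : Fin N)
      simpa [hB] using this
  have hSup : ‖A - B‖ ≤
      ⨆ i : Fin (N - 1), ‖f (a₁ + (i : ℝ) * Δ) - f (a₁ + ((i : ℝ) + 1) * Δ)‖ := by
    have := le_ciSup
      (Finite.bddAbove_range fun i : Fin (N - 1) =>
        ‖f (a₁ + (i : ℝ) * Δ) - f (a₁ + ((i : ℝ) + 1) * Δ)‖) (⟨k, hkN1⟩ : Fin (N - 1))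
    simpa [hA, hB] using this
  calc (⨅ i : Fin N, ‖f α - f (a₁ + (i : ℝ) * Δ)‖) ≤ m := hInf_le
    _ ≤ (Real.sqrt 2)⁻¹ * ‖A - B‖ := hmD
    _ ≤ (Real.sqrt 2)⁻¹ *
        ⨆ i : Fin (N - 1), ‖f (a₁ + (i : ℝ) * Δ) - f (a₁ + ((i : ℝ) + 1) * Δ)‖ :=
      mul_le_mul_of_nonneg_left hSup (by positivity)
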